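/- Let γ > 0 and φ ∈ C([0,1]). The spectrum of ℒ(ξ, ξ°) = (ξ° − ξ + γ𝒦ξ, 0) on L²(0,1) × ℝ intersects the open right half-plane {Re λ > 0} in at most finitely many points, all of which are real eigenvalues. -/

import Mathlib

open MeasureTheory Set

/-- The measure of the interval `[0,1]`, underlying the space `L²(0,1)`. -/
noncomputable def μ01 : Measure ℝ := volume.restrict (Icc (0:ℝ) 1)

namespace Stmt6Aux

open Filter Topology BoundedContinuousFunction

section Hilbert

variable {H : Type*} [NormedAddCommGroup H] [InnerProductSpace ℝ H] [CompleteSpace H]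

local notation "⟪" x ", " y "⟫" => @inner ℝ _ _ x y

/-- From a compact operator, bounded sequences have image-subsequences converging. -/
lemma compact_subseq (T : H →L[ℝ] H) (hTc : IsCompactOperator ⇑T)
    (y : ℕ → H) (hy : ∀ n, ‖y n‖ ≤ 1) :
    ∃ z : H, ∃ φ : ℕ → ℕ, StrictMono φ ∧
      Tendsto (fun n => T (y (φ n))) atTop (𝓝 z) := by
  obtain ⟨Kc, hKc, hnb⟩ := hTc
  obtain ⟨r, hr, hball⟩ := Metric.mem_nhds_iff.1 hnb
  set w : ℕ → H := fun n => (r / 2) • y n with hw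
  have hmem : ∀ n, T (w n) ∈ Kc := by
    intro n
    apply hball
    rw [Metric.mem_ball, dist_zero_right, hw]
    calc ‖(r / 2) • y n‖ = (r/2) * ‖y n‖ := by
          rw [norm_smul, Real.norm_eq_abs, abs_of_pos (by linarith)]
      _ ≤ (r/2) * 1 := by
          apply mul_le_mul_of_nonneg_left (hy n) (by linarith)
      _ < r := by linarith
  obtain ⟨a, _, φ, hφ, hconv⟩ := hKc.tendsto_subseq hmem
  refine ⟨(2 / r) • a, φ, hφ, ?_⟩
  have : (fun n => T (y (φ n))) = fun n => (2 / r) • T (w (φ n)) := by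
    funext n
    rw [hw]
    simp only [ContinuousLinearMap.map_smul, smul_smul]
    rw [show (2 / r) * (r / 2) = 1 by field_simp, one_smul]
  rw [this]
  exact hconv.const_smul _

/-- Nonzero spectral points of compact symmetric operators are eigenvalues. -/
lemma exists_eigen (T : H →L[ℝ] H) (hTc : IsCompactOperator ⇑T)
    (hsym : ∀ x y : H, ⟪T x, y⟫ = ⟪x, T y⟫) {μ : ℝ} (hμ0 : μ ≠ 0)
    (hμ : μ ∈ spectrum ℝ T) : ∃ x : H, x ≠ 0 ∧ T x = μ • x := by
  by_contra hno
  push_neg at hno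
  set S : H →L[ℝ] H := algebraMap ℝ (H →L[ℝ] H) μ - T with hSdef
  have hS : ∀ x, S x = μ • x - T x := by
    intro x
    simp [hSdef, Algebra.algebraMap_eq_smul_one]
  -- injectivity
  have hinj : ∀ x, S x = 0 → x = 0 := by
    intro x hx
    by_contra hx0
    exact hno x hx0 (by rw [hS] at hx; linear_combination (norm := module) -hx)
  -- bounded below
  have hbb : ∃ c > 0, ∀ x, c * ‖x‖ ≤ ‖S x‖ := by
    by_contra hc
    push_neg at hc
    have hseq : ∀ n : ℕ, ∃ y : H, ‖y‖ = 1 ∧ ‖S y‖ < (n + 1 : ℝ)⁻¹ := by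
      intro n
      obtain ⟨x, hx⟩ := hc ((n + 1 : ℝ)⁻¹) (by positivity)
      have hx0 : x ≠ 0 := by
        rintro rfl
        simp only [map_zero, norm_zero, mul_zero] at hx
        exact absurd hx (lt_irrefl 0)
      refine ⟨‖x‖⁻¹ • x, ?_, ?_⟩
      · rw [norm_smul, norm_inv, norm_norm, inv_mul_cancel₀ (norm_ne_zero_iff.2 hx0)]
      · rw [ContinuousLinearMap.map_smul, norm_smul, norm_inv, norm_norm]
        have hxn : 0 < ‖x‖ := norm_pos_iff.2 hx0
        rw [inv_mul_lt_iff₀ hxn, mul_comm]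
        exact hx
    choose y hy1 hy2 using hseq
    obtain ⟨z, φ, hφ, hconv⟩ := compact_subseq T hTc y (fun n => (hy1 n).le)
    have hS0 : Tendsto (fun n => S (y (φ n))) atTop (𝓝 0) := by
      have h1 : Tendsto (fun n : ℕ => ((φ n : ℝ) + 1)⁻¹) atTop (𝓝 0) := by
        apply Tendsto.comp tendsto_inv_atTop_zero
        apply tendsto_atTop_add_const_right
        exact (tendsto_natCast_atTop_atTop).comp hφ.tendsto_atTop
      refine squeeze_zero_norm (fun n => ?_) h1
      exact (hy2 (φ n)).le
    have hμy : Tendsto (fun n => μ • y (φ n)) atTop (𝓝 z) := by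
      have heq : (fun n => μ • y (φ n)) = fun n => S (y (φ n)) + T (y (φ n)) := by
        funext n; rw [hS]; abel
      rw [heq]
      simpa using hS0.add hconv
    have hyc : Tendsto (fun n => y (φ n)) atTop (𝓝 (μ⁻¹ • z)) := by
      have := hμy.const_smul μ⁻¹
      simpa [smul_smul, inv_mul_cancel₀ hμ0] using this
    have hwn : ‖μ⁻¹ • z‖ = 1 := by
      have h2 := hyc.norm
      have h3 : Tendsto (fun _ : ℕ => (1:ℝ)) atTop (𝓝 ‖μ⁻¹ • z‖) := by
        simpa [hy1] using h2
      exact tendsto_nhds_unique h3 tendsto_const_nhds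
    have hTw : T (μ⁻¹ • z) = z :=
      tendsto_nhds_unique ((T.continuous.tendsto _).comp hyc) hconv
    have hw0 : μ⁻¹ • z ≠ 0 := by
      intro h; rw [h, norm_zero] at hwn; norm_num at hwn
    refine hno (μ⁻¹ • z) hw0 ?_
    rw [hTw, smul_smul, mul_inv_cancel₀ hμ0, one_smul]
  obtain ⟨c, hc, hcb⟩ := hbb
  -- S is injective with closed range
  have hanti : AntilipschitzWith (⟨c, hc.le⟩ : NNReal)⁻¹ ⇑S := by
    apply ContinuousLinearMap.antilipschitz_of_bound
    intro x
    change ‖x‖ ≤ c⁻¹ * ‖S x‖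
    rw [inv_mul_eq_div, le_div_iff₀ hc, mul_comm]
    exact hcb x
  have hclosed : IsClosed (Set.range ⇑S) :=
    hanti.isClosed_range S.uniformContinuous
  -- dense range
  have hRclosed : IsClosed ((LinearMap.range (S : H →ₗ[ℝ] H) : Submodule ℝ H) : Set H) := by
    rw [LinearMap.coe_range, ContinuousLinearMap.coe_coe]; exact hclosed
  haveI : CompleteSpace (LinearMap.range (S : H →ₗ[ℝ] H) : Submodule ℝ H) :=
    hRclosed.completeSpace_coe
  have hSsym : ∀ x z : H, ⟪S x, z⟫ = ⟪x, S z⟫ := by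
    intro x z
    rw [hS, hS, inner_sub_left, inner_sub_right, real_inner_smul_left,
      real_inner_smul_right, hsym]
  have horth : (LinearMap.range (S : H →ₗ[ℝ] H) : Submodule ℝ H)ᗮ = ⊥ := by
    rw [Submodule.eq_bot_iff]
    intro z hz
    apply hinj
    have h0 : ⟪S (S z), z⟫ = 0 :=
      hz (S (S z)) (LinearMap.mem_range_self _ _)
    rw [hSsym] at h0
    exact inner_self_eq_zero.1 h0
  have htop : LinearMap.range (S : H →ₗ[ℝ] H) = ⊤ :=
    Submodule.orthogonal_eq_bot_iff.1 horth
  have hker : LinearMap.ker (S : H →ₗ[ℝ] H) = ⊥ := by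
    rw [LinearMap.ker_eq_bot']
    intro x hx
    exact hinj x hx
  -- S is a unit
  let e := ContinuousLinearEquiv.ofBijective S hker htop
  have hunit : IsUnit S := by
    rw [isUnit_iff_exists]
    refine ⟨(e.symm : H →L[ℝ] H), ?_, ?_⟩
    · ext x
      have : S (e.symm x) = e (e.symm x) := rfl
      simp only [ContinuousLinearMap.mul_apply, ContinuousLinearMap.one_apply,
        ContinuousLinearMap.coe_coe, this]
      exact e.apply_symm_apply x
    · ext x
      have : S x = e x := rfl
      simp only [ContinuousLinearMap.mul_apply, ContinuousLinearMap.one_apply,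
        ContinuousLinearMap.coe_coe, this]
      exact e.symm_apply_apply x
  exact (spectrum.notMem_iff.2 hunit) hμ
/-- Only finitely many spectral points `≥ 1` for a compact symmetric operator. -/
lemma finite_spectrum_ge (T : H →L[ℝ] H) (hTc : IsCompactOperator ⇑T)
    (hsym : ∀ x y : H, ⟪T x, y⟫ = ⟪x, T y⟫) :
    {μ : ℝ | μ ∈ spectrum ℝ T ∧ 1 ≤ μ}.Finite := by
  by_contra hinf
  rw [← Set.Infinite] at hinf
  let f := hinf.natEmbedding
  set μs : ℕ → ℝ := fun n => (f n : ℝ) with hμs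
  have hμmem : ∀ n, μs n ∈ spectrum ℝ T ∧ 1 ≤ μs n := fun n => (f n).2
  have hμinj : Function.Injective μs := fun n m h =>
    f.injective (Subtype.coe_injective h)
  have hμpos : ∀ n, (0:ℝ) < μs n := fun n => lt_of_lt_of_le one_pos (hμmem n).2
  -- unit eigenvectors
  have hev : ∀ n, ∃ x : H, ‖x‖ = 1 ∧ T x = μs n • x := by
    intro n
    obtain ⟨x, hx0, hxe⟩ := exists_eigen T hTc hsym (hμpos n).ne' (hμmem n).1
    refine ⟨‖x‖⁻¹ • x, ?_, ?_⟩
    · rw [norm_smul, norm_inv, norm_norm, inv_mul_cancel₀ (norm_ne_zero_iff.2 hx0)]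
    · rw [ContinuousLinearMap.map_smul, hxe, smul_comm]
  choose u hu1 hu2 using hev
  -- orthogonality
  have horth : ∀ n m, n ≠ m → ⟪u n, u m⟫ = 0 := by
    intro n m hnm
    have h1 := hsym (u n) (u m)
    rw [hu2 n, hu2 m, real_inner_smul_left, real_inner_smul_right] at h1
    have hne : μs n ≠ μs m := fun h => hnm (hμinj h)
    have := sub_eq_zero.2 h1
    rw [← sub_mul] at this
    exact (mul_eq_zero.1 this).resolve_left (sub_ne_zero.2 hne)
  obtain ⟨z, φ, hφ, hconv⟩ := compact_subseq T hTc u (fun n => (hu1 n).le)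
  have hcauchy := hconv.cauchySeq
  rw [Metric.cauchySeq_iff] at hcauchy
  obtain ⟨N, hN⟩ := hcauchy 1 one_pos
  have hd := hN (N+1) (by omega) N (by omega)
  have hne : φ (N+1) ≠ φ N := fun h => by
    have := hφ.injective h; omega
  -- distance between distinct eigen-images is ≥ √2 > 1
  have hlow : 2 ≤ ‖T (u (φ (N+1))) - T (u (φ N))‖^2 := by
    set a := u (φ (N+1)); set b := u (φ N)
    rw [hu2, hu2]
    have hip : ⟪a, b⟫ = 0 := horth _ _ hne
    have hexp : ‖μs (φ (N+1)) • a - μs (φ N) • b‖^2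
        = ‖μs (φ (N+1)) • a‖^2 - 2 * ⟪μs (φ (N+1)) • a, μs (φ N) • b⟫
          + ‖μs (φ N) • b‖^2 := by
      rw [@norm_sub_sq_real]
    rw [hexp, real_inner_smul_left, real_inner_smul_right, hip]
    rw [norm_smul, norm_smul, hu1, hu1]
    simp only [Real.norm_eq_abs, mul_one, mul_zero]
    have h1 := (hμmem (φ (N+1))).2
    have h2 := (hμmem (φ N)).2
    rw [abs_of_pos (hμpos _), abs_of_pos (hμpos _)]
    nlinarith
  rw [dist_eq_norm] at hd
  nlinarith [norm_nonneg (T (u (φ (N+1))) - T (u (φ N)))]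

end Hilbert

section Integral

instance : IsProbabilityMeasure μ01 :=
  ⟨by rw [μ01, Measure.restrict_apply_univ, Real.volume_Icc]; norm_num⟩

lemma ae_mem01 : ∀ᵐ s ∂μ01, s ∈ Icc (0:ℝ) 1 := ae_restrict_mem measurableSet_Icc

lemma int_conv (f : ℝ → ℝ) : (∫ ζ in (0:ℝ)..1, f ζ) = ∫ ζ, f ζ ∂μ01 := by
  rw [intervalIntegral.integral_of_le (by norm_num : (0:ℝ) ≤ 1)]
  exact (integral_Icc_eq_integral_Ioc).symm

/-- Properties of the kernel. -/
lemma kernel_props (φ : ℝ → ℝ) (hφ : Continuous φ) (K : ℝ → ℝ → ℝ)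
    (hK : ∀ s ζ, K s ζ = ∫ σ in max s ζ..1, Real.cos (φ σ)) :
    (∀ s ζ, K s ζ = K ζ s) ∧ (∀ s s' ζ, |K s ζ - K s' ζ| ≤ |s - s'|) ∧
    (∀ s ζ, s ∈ Icc (0:ℝ) 1 → ζ ∈ Icc (0:ℝ) 1 → |K s ζ| ≤ 1) ∧
    Continuous (fun p : ℝ × ℝ => K p.1 p.2) := by
  set g : ℝ → ℝ := fun t => ∫ σ in t..1, Real.cos (φ σ) with hg
  have hint : ∀ a b : ℝ, IntervalIntegrable (fun σ => Real.cos (φ σ)) volume a b :=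
    fun a b => (Real.continuous_cos.comp hφ).intervalIntegrable a b
  have hsub : ∀ a b : ℝ, g a - g b = ∫ σ in a..b, Real.cos (φ σ) := by
    intro a b
    have h := intervalIntegral.integral_add_adjacent_intervals (hint a b) (hint b 1)
    rw [hg]; simp only []
    linarith [h]
  have glip : ∀ a b : ℝ, |g a - g b| ≤ |a - b| := by
    intro a b
    rw [hsub]
    have := intervalIntegral.norm_integral_le_of_norm_le_const
      (a := a) (b := b) (C := 1) (f := fun σ => Real.cos (φ σ))
      (fun x _ => by rw [Real.norm_eq_abs]; exact Real.abs_cos_le_one _)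
    rw [Real.norm_eq_abs] at this
    calc |∫ σ in a..b, Real.cos (φ σ)| ≤ 1 * |b - a| := this
      _ = |a - b| := by rw [one_mul, abs_sub_comm]
  have gcont : Continuous g := by
    have : LipschitzWith 1 g := LipschitzWith.of_dist_le_mul (fun a b => by
      rw [Real.dist_eq, Real.dist_eq, NNReal.coe_one, one_mul]; exact glip a b)
    exact this.continuous
  have hKg : ∀ s ζ, K s ζ = g (max s ζ) := fun s ζ => hK s ζ
  refine ⟨fun s ζ => by rw [hKg, hKg, max_comm], ?_, ?_, ?_⟩
  · intro s s' ζ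
    rw [hKg, hKg]
    calc |g (max s ζ) - g (max s' ζ)| ≤ |max s ζ - max s' ζ| := glip _ _
      _ ≤ |s - s'| := abs_max_sub_max_le_abs s s' ζ
  · intro s ζ hs hζ
    rw [hKg]
    have h1 : g 1 = 0 := intervalIntegral.integral_same
    have hm : max s ζ ∈ Icc (0:ℝ) 1 := ⟨le_max_of_le_left hs.1, max_le hs.2 hζ.2⟩
    calc |g (max s ζ)| = |g (max s ζ) - g 1| := by rw [h1, sub_zero]
      _ ≤ |max s ζ - 1| := glip _ _
      _ ≤ 1 := by
          rw [mem_Icc] at hm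
          rw [abs_le]; constructor <;> [linarith [hm.2]; linarith [hm.1]]
  · have heq : (fun p : ℝ × ℝ => K p.1 p.2) = fun p => g (max p.1 p.2) :=
      funext fun p => hKg _ _
    rw [heq]
    exact gcont.comp (continuous_fst.max continuous_snd)

section OpFacts

lemma u_int (u : Lp ℝ 2 μ01) : Integrable (⇑u) μ01 :=
  (Lp.memLp u).integrable one_le_two

lemma u_nrm (u : Lp ℝ 2 μ01) : ∫ ζ, ‖u ζ‖ ∂μ01 ≤ ‖u‖ := by
  have hui := u_int u
  have h1 : ENNReal.ofReal (∫ ζ, ‖u ζ‖ ∂μ01) = ∫⁻ ζ, ‖u ζ‖ₑ ∂μ01 :=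
    ofReal_integral_norm_eq_lintegral_enorm hui
  have h2 : eLpNorm (⇑u) 1 μ01 = ∫⁻ ζ, ‖u ζ‖ₑ ∂μ01 := eLpNorm_one_eq_lintegral_enorm
  have h3 : eLpNorm (⇑u) 1 μ01 ≤ eLpNorm (⇑u) 2 μ01 :=
    eLpNorm_le_eLpNorm_of_exponent_le one_le_two (Lp.aestronglyMeasurable u)
  have h4 : ‖u‖ = (eLpNorm (⇑u) 2 μ01).toReal := Lp.norm_def u
  have h5 : (ENNReal.ofReal (∫ ζ, ‖u ζ‖ ∂μ01)).toReal ≤ (eLpNorm (⇑u) 2 μ01).toReal := by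
    apply ENNReal.toReal_mono (Lp.eLpNorm_ne_top u)
    rw [h1, ← h2]; exact h3
  rwa [ENNReal.toReal_ofReal (integral_nonneg (fun x => norm_nonneg _)), ← h4] at h5

lemma Ks_meas (K : ℝ → ℝ → ℝ) (hKcont : Continuous (fun p : ℝ × ℝ => K p.1 p.2))
    (s : ℝ) : AEStronglyMeasurable (fun ζ => K s ζ) μ01 :=
  (hKcont.comp (Continuous.prodMk_right s)).aestronglyMeasurable

lemma Ks_int (K : ℝ → ℝ → ℝ)
    (hK3 : ∀ s ζ, s ∈ Icc (0:ℝ) 1 → ζ ∈ Icc (0:ℝ) 1 → |K s ζ| ≤ 1)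
    (hKcont : Continuous (fun p : ℝ × ℝ => K p.1 p.2))
    (u : Lp ℝ 2 μ01) (s : ℝ) (hs : s ∈ Icc (0:ℝ) 1) :
    Integrable (fun ζ => K s ζ * u ζ) μ01 := by
  apply (u_int u).bdd_mul (Ks_meas K hKcont s) (c := 1)
  filter_upwards [ae_mem01] with ζ hζ
  rw [Real.norm_eq_abs]
  exact hK3 s ζ hs hζ

/-- The integral operator function, its bounds. -/
lemma F_bound (K : ℝ → ℝ → ℝ)
    (hK3 : ∀ s ζ, s ∈ Icc (0:ℝ) 1 → ζ ∈ Icc (0:ℝ) 1 → |K s ζ| ≤ 1)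
    (hKcont : Continuous (fun p : ℝ × ℝ => K p.1 p.2))
    (u : Lp ℝ 2 μ01) (s : ℝ) (hs : s ∈ Icc (0:ℝ) 1) :
    |∫ ζ, K s ζ * u ζ ∂μ01| ≤ ‖u‖ := by
  rw [← Real.norm_eq_abs]
  calc ‖∫ ζ, K s ζ * u ζ ∂μ01‖ ≤ ∫ ζ, ‖K s ζ * u ζ‖ ∂μ01 :=
        norm_integral_le_integral_norm _
    _ ≤ ∫ ζ, ‖u ζ‖ ∂μ01 := by
        apply integral_mono_ae (Ks_int K hK3 hKcont u s hs).norm (u_int u).norm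
        filter_upwards [ae_mem01] with ζ hζ
        rw [norm_mul]
        calc ‖K s ζ‖ * ‖u ζ‖ ≤ 1 * ‖u ζ‖ :=
              mul_le_mul_of_nonneg_right (by rw [Real.norm_eq_abs]; exact hK3 s ζ hs hζ)
                (norm_nonneg _)
          _ = ‖u ζ‖ := one_mul _
    _ ≤ ‖u‖ := u_nrm u

lemma F_lip (K : ℝ → ℝ → ℝ)
    (hK2 : ∀ s s' ζ, |K s ζ - K s' ζ| ≤ |s - s'|)
    (hK3 : ∀ s ζ, s ∈ Icc (0:ℝ) 1 → ζ ∈ Icc (0:ℝ) 1 → |K s ζ| ≤ 1)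
    (hKcont : Continuous (fun p : ℝ × ℝ => K p.1 p.2))
    (u : Lp ℝ 2 μ01) (s s' : ℝ) (hs : s ∈ Icc (0:ℝ) 1) (hs' : s' ∈ Icc (0:ℝ) 1) :
    |(∫ ζ, K s ζ * u ζ ∂μ01) - ∫ ζ, K s' ζ * u ζ ∂μ01| ≤ |s - s'| * ‖u‖ := by
  rw [← integral_sub (Ks_int K hK3 hKcont u s hs) (Ks_int K hK3 hKcont u s' hs')]
  rw [← Real.norm_eq_abs]
  calc ‖∫ ζ, (K s ζ * u ζ - K s' ζ * u ζ) ∂μ01‖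
      ≤ ∫ ζ, ‖K s ζ * u ζ - K s' ζ * u ζ‖ ∂μ01 := norm_integral_le_integral_norm _
    _ ≤ ∫ ζ, |s - s'| * ‖u ζ‖ ∂μ01 := by
        apply integral_mono_ae ((Ks_int K hK3 hKcont u s hs).sub
          (Ks_int K hK3 hKcont u s' hs')).norm ((u_int u).norm.const_mul _)
        filter_upwards with ζ
        simp only [Pi.sub_apply]
        rw [← sub_mul, norm_mul]
        exact mul_le_mul_of_nonneg_right (by rw [Real.norm_eq_abs]; exact hK2 s s' ζ)
          (norm_nonneg _)
    _ = |s - s'| * ∫ ζ, ‖u ζ‖ ∂μ01 := integral_const_mul _ _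
    _ ≤ |s - s'| * ‖u‖ := mul_le_mul_of_nonneg_left (u_nrm u) (abs_nonneg _)
/-- The operator `𝒦` is compact. -/
lemma K_compact (K : ℝ → ℝ → ℝ)
    (hK2 : ∀ s s' ζ, |K s ζ - K s' ζ| ≤ |s - s'|)
    (hK3 : ∀ s ζ, s ∈ Icc (0:ℝ) 1 → ζ ∈ Icc (0:ℝ) 1 → |K s ζ| ≤ 1)
    (hKcont : Continuous (fun p : ℝ × ℝ => K p.1 p.2))
    (𝒦 : Lp ℝ 2 μ01 →L[ℝ] Lp ℝ 2 μ01)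
    (h𝒦 : ∀ u : Lp ℝ 2 μ01, ⇑(𝒦 u) =ᵐ[μ01] fun s => ∫ ζ, K s ζ * u ζ ∂μ01) :
    IsCompactOperator ⇑𝒦 := by
  classical
  set cI : C(ℝ, Icc (0:ℝ) 1) := ⟨projIcc 0 1 zero_le_one, continuous_projIcc⟩ with hcI
  set J : ((Icc (0:ℝ) 1) →ᵇ ℝ) → Lp ℝ 2 μ01 :=
    fun f => BoundedContinuousFunction.toLp (E := ℝ) 2 μ01 ℝ (f.compContinuous cI) with hJ
  have hcomplip : LipschitzWith 1
      (fun f : (Icc (0:ℝ) 1) →ᵇ ℝ => f.compContinuous cI) := by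
    apply LipschitzWith.of_dist_le_mul
    intro f g
    rw [NNReal.coe_one, one_mul]
    exact (BoundedContinuousFunction.dist_le (dist_nonneg (x := f) (y := g))).2
      (fun x => BoundedContinuousFunction.dist_coe_le_dist (cI x))
  have hJcont : Continuous J :=
    (BoundedContinuousFunction.toLp (E := ℝ) 2 μ01 ℝ).continuous.comp hcomplip.continuous
  set A : Set ((Icc (0:ℝ) 1) →ᵇ ℝ) :=
    {f | LipschitzWith 1 ⇑f ∧ ∀ x, f x ∈ Icc (-1:ℝ) 1} with hA
  have hAcomp : IsCompact (closure A) := by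
    apply BoundedContinuousFunction.arzela_ascoli (Icc (-1:ℝ) 1) isCompact_Icc A
    · intro f x hf
      exact hf.2 x
    · apply Metric.equicontinuous_of_continuity_modulus id
      · exact tendsto_id
      · rintro x y ⟨f, hf⟩
        simpa using hf.1.dist_le_mul x y
  refine ⟨J '' closure A, hAcomp.image hJcont, ?_⟩
  apply Filter.mem_of_superset (Metric.ball_mem_nhds 0 one_pos)
  intro u hu
  rw [mem_ball_zero_iff] at hu
  -- build the bounded continuous representative
  have hlip : LipschitzWith 1 (fun x : Icc (0:ℝ) 1 => ∫ ζ, K (x:ℝ) ζ * u ζ ∂μ01) := by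
    apply LipschitzWith.of_dist_le_mul
    intro x y
    rw [NNReal.coe_one, one_mul, Real.dist_eq, Subtype.dist_eq, Real.dist_eq]
    calc |(∫ ζ, K (x:ℝ) ζ * u ζ ∂μ01) - ∫ ζ, K (y:ℝ) ζ * u ζ ∂μ01|
        ≤ |(x:ℝ) - (y:ℝ)| * ‖u‖ := F_lip K hK2 hK3 hKcont u _ _ x.2 y.2
      _ ≤ |(x:ℝ) - (y:ℝ)| * 1 := mul_le_mul_of_nonneg_left hu.le (abs_nonneg _)
      _ = |(x:ℝ) - (y:ℝ)| := mul_one _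
  set fb : (Icc (0:ℝ) 1) →ᵇ ℝ := BoundedContinuousFunction.mkOfCompact
    ⟨fun x : Icc (0:ℝ) 1 => ∫ ζ, K (x:ℝ) ζ * u ζ ∂μ01, hlip.continuous⟩ with hfb
  have hfbA : fb ∈ A := by
    constructor
    · intro x y
      exact hlip x y
    · intro x
      rw [mem_Icc, ← abs_le]
      calc |fb x| = |∫ ζ, K (x:ℝ) ζ * u ζ ∂μ01| := rfl
        _ ≤ ‖u‖ := F_bound K hK3 hKcont u _ x.2
        _ ≤ 1 := hu.le
  refine ⟨fb, subset_closure hfbA, ?_⟩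
  -- J fb = 𝒦 u
  apply Lp.ext (p := (2:ENNReal)) (μ := μ01)
  have h1 : ⇑(J fb) =ᵐ[μ01] ⇑(fb.compContinuous cI) :=
    BoundedContinuousFunction.coeFn_toLp 2 μ01 ℝ _
  filter_upwards [h1, h𝒦 u, ae_mem01] with s hs1 hs2 hs3
  rw [hs1, hs2]
  show fb (cI s) = _
  have : cI s = ⟨s, hs3⟩ := by
    rw [hcI]
    exact projIcc_of_mem zero_le_one hs3
  rw [this]
  rfl
/-- Symmetry of the integral operator. -/
lemma K_symm (K : ℝ → ℝ → ℝ)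
    (hK1 : ∀ s ζ, K s ζ = K ζ s)
    (hK3 : ∀ s ζ, s ∈ Icc (0:ℝ) 1 → ζ ∈ Icc (0:ℝ) 1 → |K s ζ| ≤ 1)
    (hKcont : Continuous (fun p : ℝ × ℝ => K p.1 p.2))
    (𝒦 : Lp ℝ 2 μ01 →L[ℝ] Lp ℝ 2 μ01)
    (h𝒦 : ∀ u : Lp ℝ 2 μ01, ⇑(𝒦 u) =ᵐ[μ01] fun s => ∫ ζ, K s ζ * u ζ ∂μ01)
    (u v : Lp ℝ 2 μ01) :
    @inner ℝ _ _ (𝒦 u) v = @inner ℝ _ _ u (𝒦 v) := by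
  -- the product-measure integrand
  have hprod_ae : ∀ᵐ p ∂(μ01.prod μ01), p ∈ (Icc (0:ℝ) 1) ×ˢ (Icc (0:ℝ) 1) := by
    have : (μ01.prod μ01) = (volume.prod volume).restrict
        ((Icc (0:ℝ) 1) ×ˢ (Icc (0:ℝ) 1)) := Measure.prod_restrict _ _
    rw [this]
    exact ae_restrict_mem (measurableSet_Icc.prod measurableSet_Icc)
  have hswap : ∀ u' v' : Lp ℝ 2 μ01,
      Integrable (fun p : ℝ × ℝ => K p.1 p.2 * u' p.2 * v' p.1) (μ01.prod μ01) := by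
    intro u' v'
    have hmeas : AEStronglyMeasurable
        (fun p : ℝ × ℝ => K p.1 p.2 * u' p.2 * v' p.1) (μ01.prod μ01) :=
      ((hKcont.aestronglyMeasurable).mul
        ((Lp.aestronglyMeasurable u').comp_snd)).mul ((Lp.aestronglyMeasurable v').comp_fst)
    have hbase : Integrable (fun p : ℝ × ℝ => v' p.1 * u' p.2) (μ01.prod μ01) :=
      (u_int v').mul_prod (u_int u')
    apply hbase.mono hmeas
    filter_upwards [hprod_ae] with p hp
    rw [Real.norm_eq_abs, Real.norm_eq_abs, abs_mul, abs_mul, abs_mul]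
    have h1 : |K p.1 p.2| ≤ 1 := hK3 _ _ hp.1 hp.2
    have h2 : 0 ≤ |u' p.2| * |v' p.1| := mul_nonneg (abs_nonneg _) (abs_nonneg _)
    nlinarith [h2, abs_nonneg (K p.1 p.2)]
  -- inner products as double integrals
  have hinner : ∀ u' v' : Lp ℝ 2 μ01,
      @inner ℝ _ _ (𝒦 u') v' = ∫ s, (∫ ζ, K s ζ * u' ζ ∂μ01) * v' s ∂μ01 := by
    intro u' v'
    rw [MeasureTheory.L2.inner_def]
    apply integral_congr_ae
    filter_upwards [h𝒦 u'] with s hs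
    rw [hs]
    simp [RCLike.inner_apply, starRingEnd_apply, mul_comm]
  have key : ∀ u' v' : Lp ℝ 2 μ01,
      ∫ s, (∫ ζ, K s ζ * u' ζ ∂μ01) * v' s ∂μ01
        = ∫ ζ, (∫ s, K ζ s * v' s ∂μ01) * u' ζ ∂μ01 := by
    intro u' v'
    have h1 : ∫ s, (∫ ζ, K s ζ * u' ζ ∂μ01) * v' s ∂μ01
        = ∫ s, ∫ ζ, K s ζ * u' ζ * v' s ∂μ01 ∂μ01 := by
      apply integral_congr_ae
      filter_upwards with s
      rw [← integral_mul_const]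
    have h2 := integral_integral_swap (f := fun s ζ => K s ζ * u' ζ * v' s)
      (μ := μ01) (ν := μ01) (hswap u' v')
    rw [h1, h2]
    apply integral_congr_ae
    filter_upwards with ζ
    rw [← integral_mul_const]
    apply integral_congr_ae
    filter_upwards with s
    rw [hK1 ζ s]
    ring
  rw [hinner u v, key u v, ← hinner v u, real_inner_comm]

end OpFacts

end Integral

end Stmt6Aux

open Stmt6Aux

set_option maxHeartbeats 1000000 in
/-- the spectrum of `ℒ(ξ, ξ°) = (ξ° − ξ + γ𝒦ξ, 0)` on `L²(0,1) × ℝ`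
meets the open right half-plane in at most finitely many points, each of which is a
(real) eigenvalue. -/
theorem stmt_6 (φ : ℝ → ℝ) (hφ : Continuous φ) (γ : ℝ) (hγ : 0 < γ)
    (K : ℝ → ℝ → ℝ)
    (hK : ∀ s ζ, K s ζ = ∫ σ in max s ζ..1, Real.cos (φ σ))
    (𝒦 : Lp ℝ 2 μ01 →L[ℝ] Lp ℝ 2 μ01)
    (h𝒦 : ∀ u : Lp ℝ 2 μ01, ⇑(𝒦 u) =ᵐ[μ01] fun s => ∫ ζ in (0:ℝ)..1, K s ζ * u ζ)
    (L : (Lp ℝ 2 μ01 × ℝ) →L[ℝ] (Lp ℝ 2 μ01 × ℝ))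
    (hL1 : ∀ v : Lp ℝ 2 μ01 × ℝ,
      ⇑((L v).1) =ᵐ[μ01] fun s => v.2 - v.1 s + γ * (𝒦 v.1) s)
    (hL2 : ∀ v : Lp ℝ 2 μ01 × ℝ, (L v).2 = 0) :
    ({lam ∈ spectrum ℝ L | 0 < lam}).Finite ∧
    (∀ lam ∈ spectrum ℝ L, 0 < lam →
      ∃ v : Lp ℝ 2 μ01 × ℝ, v ≠ 0 ∧ L v = lam • v) := by
  classical
  obtain ⟨hK1, hK2, hK3, hKcont⟩ := kernel_props φ hφ K hK
  set H := Lp ℝ 2 μ01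
  -- convert h𝒦 to measure-integral form
  have h𝒦' : ∀ u : H, ⇑(𝒦 u) =ᵐ[μ01] fun s => ∫ ζ, K s ζ * u ζ ∂μ01 := by
    intro u
    filter_upwards [h𝒦 u] with s hs
    rw [hs, int_conv]
  -- the constant function 1
  set e : H := (memLp_const (1:ℝ)).toLp _ with he
  have hecoe : ⇑e =ᵐ[μ01] fun _ => (1:ℝ) := MemLp.coeFn_toLp _
  -- structural form of L
  have hLd : ∀ v : H × ℝ, L v = (v.2 • e - v.1 + γ • 𝒦 v.1, 0) := by
    intro v
    refine Prod.ext ?_ (hL2 v)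
    apply Lp.ext (p := (2:ENNReal)) (μ := μ01)
    filter_upwards [hL1 v, Lp.coeFn_add (v.2 • e - v.1) (γ • 𝒦 v.1),
      Lp.coeFn_sub (v.2 • e) v.1, Lp.coeFn_smul v.2 e, Lp.coeFn_smul γ (𝒦 v.1),
      hecoe] with s h1 h2 h3 h4 h5 h6
    rw [h1, h2, Pi.add_apply, h3, Pi.sub_apply, h4, Pi.smul_apply, h6, h5,
      Pi.smul_apply, smul_eq_mul, smul_eq_mul, mul_one]
  -- the compact symmetric operator T = γ𝒦
  set T : H →L[ℝ] H := γ • 𝒦 with hT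
  have hTapp : ∀ x : H, T x = γ • 𝒦 x := fun x => rfl
  have hTc : IsCompactOperator ⇑T := by
    have h := (K_compact K hK2 hK3 hKcont 𝒦 h𝒦').smul γ
    have : ⇑T = γ • ⇑𝒦 := by funext x; rfl
    rwa [this]
  have hTsym : ∀ x y : H, @inner ℝ _ _ (T x) y = @inner ℝ _ _ x (T y) := by
    intro x y
    rw [hTapp, hTapp, real_inner_smul_left, real_inner_smul_right,
      K_symm K hK1 hK3 hKcont 𝒦 h𝒦' x y]
  -- resolvent reduction
  have hres : ∀ lam : ℝ, 0 < lam → lam ∈ spectrum ℝ L → (1 + lam) ∈ spectrum ℝ T := by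
    intro lam hlam hspec
    by_contra hns
    have hunit := spectrum.notMem_iff.1 hns
    obtain ⟨w, hw⟩ := hunit
    set S : H →L[ℝ] H := ↑w⁻¹ with hS
    have hRS : ∀ x, (algebraMap ℝ (H →L[ℝ] H) (1+lam) - T) (S x) = x := by
      intro x
      conv_lhs => rw [← hw]
      rw [← ContinuousLinearMap.mul_apply, w.mul_inv, ContinuousLinearMap.one_apply]
    have hSR : ∀ x, S ((algebraMap ℝ (H →L[ℝ] H) (1+lam) - T) x) = x := by
      intro x
      conv_lhs => rw [← hw]
      rw [← ContinuousLinearMap.mul_apply, w.inv_mul, ContinuousLinearMap.one_apply]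
    set B : (H × ℝ) →L[ℝ] H := S.comp ((ContinuousLinearMap.fst ℝ H ℝ)
      + lam⁻¹ • (ContinuousLinearMap.snd ℝ H ℝ).smulRight e) with hB
    set C : (H × ℝ) →L[ℝ] ℝ := lam⁻¹ • ContinuousLinearMap.snd ℝ H ℝ with hC
    set M : (H × ℝ) →L[ℝ] (H × ℝ) := B.prod C with hM
    have hBapp : ∀ v : H × ℝ, B v = S (v.1 + (lam⁻¹ * v.2) • e) := by
      intro v
      rw [hB]
      simp only [ContinuousLinearMap.coe_comp', Function.comp_apply,
        ContinuousLinearMap.add_apply, ContinuousLinearMap.coe_fst',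
        ContinuousLinearMap.smul_apply, ContinuousLinearMap.smulRight_apply,
        ContinuousLinearMap.coe_snd', smul_smul, smul_eq_mul]
    have hCapp : ∀ v : H × ℝ, C v = lam⁻¹ * v.2 := by
      intro v
      rw [hC]
      simp only [ContinuousLinearMap.smul_apply, ContinuousLinearMap.coe_snd',
        smul_eq_mul]
    have hsubL : ∀ v : H × ℝ, (algebraMap ℝ ((H × ℝ) →L[ℝ] (H × ℝ)) lam - L) v
        = ((algebraMap ℝ (H →L[ℝ] H) (1+lam) - T) v.1 - v.2 • e, lam * v.2) := by
      intro v
      rw [ContinuousLinearMap.sub_apply, Algebra.algebraMap_eq_smul_one,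
        ContinuousLinearMap.smul_apply, ContinuousLinearMap.one_apply, hLd v]
      refine Prod.ext ?_ ?_
      · show lam • v.1 - (v.2 • e - v.1 + γ • 𝒦 v.1)
          = (algebraMap ℝ (H →L[ℝ] H) (1+lam)) v.1 - T v.1 - v.2 • e
        rw [Algebra.algebraMap_eq_smul_one, ContinuousLinearMap.smul_apply,
          ContinuousLinearMap.one_apply, hTapp]
        module
      · show lam • v.2 - 0 = lam * v.2
        rw [sub_zero, smul_eq_mul]
    have hMapp : ∀ v : H × ℝ, M v = (S (v.1 + (lam⁻¹ * v.2) • e), lam⁻¹ * v.2) := by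
      intro v
      rw [hM, ContinuousLinearMap.prod_apply, hBapp, hCapp]
    refine absurd hspec ?_
    rw [spectrum.notMem_iff, isUnit_iff_exists]
    refine ⟨M, ?_, ?_⟩
    · apply ContinuousLinearMap.ext
      intro v
      rw [ContinuousLinearMap.mul_apply, hMapp, hsubL]
      simp only [ContinuousLinearMap.one_apply]
      refine Prod.ext ?_ ?_
      · show (algebraMap ℝ (H →L[ℝ] H) (1+lam) - T) (S (v.1 + (lam⁻¹ * v.2) • e))
            - (lam⁻¹ * v.2) • e = v.1
        rw [hRS]
        abel
      · show lam * (lam⁻¹ * v.2) = v.2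
        field_simp
    · apply ContinuousLinearMap.ext
      intro v
      rw [ContinuousLinearMap.mul_apply, hsubL, hMapp]
      simp only [ContinuousLinearMap.one_apply]
      refine Prod.ext ?_ ?_
      · show S (((algebraMap ℝ (H →L[ℝ] H) (1+lam) - T) v.1 - v.2 • e)
            + (lam⁻¹ * (lam * v.2)) • e) = v.1
        have hl : lam⁻¹ * (lam * v.2) = v.2 := by field_simp
        rw [hl]
        rw [sub_add_cancel]
        exact hSR v.1
      · show lam⁻¹ * (lam * v.2) = v.2
        field_simp
  -- eigenvalue part
  have heig : ∀ lam ∈ spectrum ℝ L, 0 < lam →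
      ∃ v : H × ℝ, v ≠ 0 ∧ L v = lam • v := by
    intro lam hl hl0
    have hmem := hres lam hl0 hl
    obtain ⟨x, hx0, hxe⟩ := exists_eigen T hTc hTsym (by positivity : (0:ℝ) < 1 + lam).ne' hmem
    refine ⟨(x, 0), ?_, ?_⟩
    · intro h
      exact hx0 (congrArg Prod.fst h)
    · rw [hLd, Prod.smul_mk, smul_zero]
      refine Prod.ext ?_ rfl
      show (0:ℝ) • e - x + γ • 𝒦 x = lam • x
      have h1 : γ • 𝒦 x = (1 + lam) • x := by rw [← hTapp, hxe]
      rw [h1]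
      module
  refine ⟨?_, heig⟩
  have hsub : {lam ∈ spectrum ℝ L | 0 < lam}
      ⊆ (fun μρ => μρ - 1) '' {μ : ℝ | μ ∈ spectrum ℝ T ∧ 1 ≤ μ} := by
    rintro lam ⟨hl, hl0⟩
    exact ⟨1 + lam, ⟨hres lam hl0 hl, by linarith⟩, by ring⟩
  exact (((finite_spectrum_ge T hTc hTsym).image _).subset hsub)
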